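/- arXiv:1808.10483 — 2 statements merged into one kernel-verified Lean document; each statement's English description precedes it below -/
import Mathlib

section
/- (Scheffé) If φ : Ω → [0,1] is a permutation test at significance level α (i.e., (1/n!) Σ_{π∈S_n} φ(πx) = α a.e.) and g_0 is an exchangeable probability density on the S_n-symmetric measurable set Ω, then ∫_Ω g_0 φ dμ = α; that is, the permutation test is exact. -/
open MeasureTheory

/-- The action of a permutation `π` on vectors: `(π • x) k = x (π k)`. -/
def permAct {n : ℕ} (π : Equiv.Perm (Fin n)) (x : Fin n → ℝ) : Fin n → ℝ := x ∘ π

lemma permAct_eq {n : ℕ} (π : Equiv.Perm (Fin n)) :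
    permAct π = ⇑(MeasurableEquiv.piCongrLeft (fun _ : Fin n => ℝ) π.symm) := by
  funext x i
  simp [permAct, MeasurableEquiv.piCongrLeft, Equiv.piCongrLeft_apply]

lemma permAct_mp {n : ℕ} (π : Equiv.Perm (Fin n)) :
    MeasurePreserving (permAct π) (volume : Measure (Fin n → ℝ)) volume := by
  rw [permAct_eq]
  exact volume_measurePreserving_piCongrLeft _ _

lemma permAct_emb {n : ℕ} (π : Equiv.Perm (Fin n)) :
    MeasurableEmbedding (permAct (n := n) π) := by
  rw [permAct_eq]
  exact (MeasurableEquiv.piCongrLeft (fun _ : Fin n => ℝ) π.symm).measurableEmbedding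

lemma permAct_meas {n : ℕ} (π : Equiv.Perm (Fin n)) :
    Measurable (permAct (n := n) π) := (permAct_emb π).measurable

/-- (Scheffé) A permutation test is exact on exchangeable probability densities. -/
theorem stmt_6 {n : ℕ} (Ω : Set (Fin n → ℝ)) (hΩmeas : MeasurableSet Ω)
    (hΩsym : ∀ (π : Equiv.Perm (Fin n)) (x : Fin n → ℝ), x ∈ Ω → permAct π x ∈ Ω)
    (g₀ : (Fin n → ℝ) → ℝ) (hg₀meas : Measurable g₀)
    (hg₀pos : ∀ x, 0 ≤ g₀ x)
    (hg₀int : IntegrableOn g₀ Ω volume)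
    (hdens : ∫ x in Ω, g₀ x = 1)
    (hexch : ∀ (π : Equiv.Perm (Fin n)) (x : Fin n → ℝ), g₀ (permAct π x) = g₀ x)
    (α : ℝ) (φ : (Fin n → ℝ) → ℝ) (hφmeas : Measurable φ)
    (hφ01 : ∀ x, φ x ∈ Set.Icc (0 : ℝ) 1)
    (hperm : ∀ᵐ x ∂(volume.restrict Ω),
      (1 / (n.factorial : ℝ)) * ∑ π : Equiv.Perm (Fin n), φ (permAct π x) = α) :
    ∫ x in Ω, g₀ x * φ x = α := by
  have hfac : (n.factorial : ℝ) ≠ 0 := Nat.cast_ne_zero.mpr n.factorial_ne_zero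
  -- Ω is invariant under each permutation
  have hpre : ∀ π : Equiv.Perm (Fin n), permAct π ⁻¹' Ω = Ω := by
    intro π
    ext x
    constructor
    · intro hx
      have := hΩsym π⁻¹ _ hx
      have hxx : permAct π⁻¹ (permAct π x) = x := by
        funext i; simp [permAct]
      rwa [hxx] at this
    · exact fun hx => hΩsym π x hx
  -- each term integrable
  have hint : ∀ π : Equiv.Perm (Fin n),
      IntegrableOn (fun x => g₀ x * φ (permAct π x)) Ω volume := by
    intro π
    apply Integrable.mono' hg₀int
      ((hg₀meas.mul (hφmeas.comp (permAct_meas π))).aestronglyMeasurable)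
    filter_upwards with x
    have h1 := hφ01 (permAct π x)
    simp only [Pi.mul_apply, Function.comp_apply, Real.norm_eq_abs]
    rw [abs_mul, abs_of_nonneg (hg₀pos x), abs_of_nonneg h1.1]
    calc g₀ x * φ (permAct π x) ≤ g₀ x * 1 := by
          exact mul_le_mul_of_nonneg_left h1.2 (hg₀pos x)
      _ = g₀ x := mul_one _
  -- invariance of the integral
  have hswap : ∀ π : Equiv.Perm (Fin n),
      ∫ x in Ω, g₀ x * φ (permAct π x) = ∫ x in Ω, g₀ x * φ x := by
    intro π
    have h1 : ∫ x in Ω, g₀ x * φ (permAct π x)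
        = ∫ x in Ω, g₀ (permAct π x) * φ (permAct π x) := by
      apply setIntegral_congr_fun hΩmeas
      intro x _
      simp only
      rw [hexch]
    rw [h1]
    have := (permAct_mp π).setIntegral_preimage_emb (permAct_emb π)
      (fun y => g₀ y * φ y) Ω
    rw [hpre π] at this
    exact this
  -- sum over permutations
  have hsum : (n.factorial : ℝ) * ∫ x in Ω, g₀ x * φ x
      = ∑ π : Equiv.Perm (Fin n), ∫ x in Ω, g₀ x * φ (permAct π x) := by
    rw [Finset.sum_congr rfl (fun π _ => hswap π), Finset.sum_const,
      Finset.card_univ, Fintype.card_perm, Fintype.card_fin, nsmul_eq_mul]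
  rw [← integral_finset_sum _ (fun π _ => hint π)] at hsum
  have hcongr : ∫ x in Ω, ∑ π : Equiv.Perm (Fin n), g₀ x * φ (permAct π x)
      = ∫ x in Ω, g₀ x * ((n.factorial : ℝ) * α) := by
    apply integral_congr_ae
    filter_upwards [hperm] with x hx
    rw [← Finset.mul_sum]
    have : (∑ π : Equiv.Perm (Fin n), φ (permAct π x)) = (n.factorial : ℝ) * α := by
      field_simp at hx
      linarith [hx]
    rw [this]
  rw [hcongr] at hsum
  have : ∫ x in Ω, g₀ x * ((n.factorial : ℝ) * α)
      = (∫ x in Ω, g₀ x) * ((n.factorial : ℝ) * α) := by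
    rw [integral_mul_const]
  rw [this, hdens, one_mul] at hsum
  exact mul_left_cancel₀ hfac hsum
end

section
/- If g_0 is a probability density on an S_n-symmetric measurable set Ω with symmetrization h non-zero a.e., and φ : Ω → [0,1] is a generalized permutation test at significance level α with respect to g_0 (i.e., (1/n!) Σ_{π∈S_n} (g_0(πx)/h(x)) φ(πx) = α a.e.), then ∫_Ω g_0 φ dμ = α. -/
open MeasureTheory

/-- The symmetrization of `g₀`. -/
noncomputable def symmetrize {n : ℕ} (g₀ : (Fin n → ℝ) → ℝ) (x : Fin n → ℝ) : ℝ :=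
  (1 / (n.factorial : ℝ)) * ∑ π : Equiv.Perm (Fin n), g₀ (permAct π x)

/-- A generalized permutation test is exact on probability densities whose symmetrization
is non-zero a.e. -/
theorem stmt_10 {n : ℕ} (Ω : Set (Fin n → ℝ)) (hΩmeas : MeasurableSet Ω)
    (hΩsym : ∀ (π : Equiv.Perm (Fin n)) (x : Fin n → ℝ), x ∈ Ω → permAct π x ∈ Ω)
    (g₀ : (Fin n → ℝ) → ℝ) (hg₀meas : Measurable g₀) (hg₀pos : ∀ x, 0 ≤ g₀ x)
    (hg₀int : IntegrableOn g₀ Ω volume) (hdens : ∫ x in Ω, g₀ x = 1)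
    (hne : ∀ᵐ x ∂(volume.restrict Ω), symmetrize g₀ x ≠ 0)
    (α : ℝ) (φ : (Fin n → ℝ) → ℝ) (hφmeas : Measurable φ)
    (hφ01 : ∀ x, φ x ∈ Set.Icc (0 : ℝ) 1)
    (hgperm : ∀ᵐ x ∂(volume.restrict Ω),
      (1 / (n.factorial : ℝ)) *
        ∑ π : Equiv.Perm (Fin n), (g₀ (permAct π x) / symmetrize g₀ x) * φ (permAct π x) = α) :
    ∫ x in Ω, g₀ x * φ x = α := by
  have hfac : (n.factorial : ℝ) ≠ 0 := Nat.cast_ne_zero.mpr n.factorial_ne_zero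
  -- permAct π equals a measurable equiv
  have heq : ∀ π : Equiv.Perm (Fin n),
      permAct (n := n) π = ⇑(MeasurableEquiv.piCongrLeft (fun _ : Fin n => ℝ) π.symm) := by
    intro π
    funext x i
    rw [MeasurableEquiv.coe_piCongrLeft]
    simp [permAct, Equiv.piCongrLeft_apply_apply]
    simp [Equiv.piCongrLeft_apply]
  have hmp : ∀ π : Equiv.Perm (Fin n),
      MeasurePreserving (permAct π) (volume : Measure (Fin n → ℝ)) volume := by
    intro π
    rw [heq π]
    exact MeasureTheory.volume_measurePreserving_piCongrLeft (fun _ : Fin n => ℝ) π.symm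
  have hemb : ∀ π : Equiv.Perm (Fin n), MeasurableEmbedding (permAct (n := n) π) := by
    intro π
    rw [heq π]
    exact (MeasurableEquiv.piCongrLeft (fun _ : Fin n => ℝ) π.symm).measurableEmbedding
  -- preimage of Ω is Ω
  have hpre : ∀ π : Equiv.Perm (Fin n), permAct π ⁻¹' Ω = Ω := by
    intro π
    ext x
    constructor
    · intro hx
      have := hΩsym π⁻¹ _ hx
      have hxx : permAct π⁻¹ (permAct π x) = x := by
        funext i; simp [permAct]
      rwa [hxx] at this
    · exact hΩsym π x
  -- change of variables for integrals over Ω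
  have hcov : ∀ (f : (Fin n → ℝ) → ℝ) (π : Equiv.Perm (Fin n)),
      ∫ x in Ω, f (permAct π x) = ∫ x in Ω, f x := by
    intro f π
    have := (hmp π).setIntegral_preimage_emb (hemb π) f Ω
    rwa [hpre π] at this
  -- integrability of compositions
  have hIntg : ∀ π : Equiv.Perm (Fin n),
      IntegrableOn (fun x => g₀ (permAct π x)) Ω volume := by
    intro π
    have := ((hmp π).integrableOn_comp_preimage (hemb π) (f := g₀) (s := Ω)).mpr hg₀int
    rwa [hpre π] at this
  have hIntgφ : ∀ π : Equiv.Perm (Fin n),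
      IntegrableOn (fun x => g₀ (permAct π x) * φ (permAct π x)) Ω volume := by
    intro π
    have h1 : Integrable (fun x => φ (permAct π x) * g₀ (permAct π x))
        (volume.restrict Ω) := by
      apply Integrable.bdd_mul (c := 1) (hIntg π)
      · exact ((hφmeas.comp ((hmp π).measurable)).aestronglyMeasurable)
      · filter_upwards with x
        have h01 := hφ01 (permAct π x)
        rw [Real.norm_eq_abs, abs_le]
        exact ⟨by linarith [h01.1], h01.2⟩
    simpa [IntegrableOn, mul_comm] using h1
  -- key a.e. identity : (1/n!) Σ g₀(πx) φ(πx) = symmetrize g₀ x * α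
  have hkey : ∀ᵐ x ∂(volume.restrict Ω),
      (1 / (n.factorial : ℝ)) *
        ∑ π : Equiv.Perm (Fin n), g₀ (permAct π x) * φ (permAct π x)
        = symmetrize g₀ x * α := by
    filter_upwards [hne, hgperm] with x hx hg
    rw [← hg, Finset.mul_sum, Finset.mul_sum, Finset.mul_sum]
    refine Finset.sum_congr rfl fun π _ => ?_
    field_simp
  -- integrate both sides
  have hIntL : IntegrableOn (fun x => (1 / (n.factorial : ℝ)) *
      ∑ π : Equiv.Perm (Fin n), g₀ (permAct π x) * φ (permAct π x)) Ω volume := by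
    apply Integrable.const_mul
    exact integrable_finset_sum _ fun π _ => hIntgφ π
  have hint_eq : ∫ x in Ω, (1 / (n.factorial : ℝ)) *
      ∑ π : Equiv.Perm (Fin n), g₀ (permAct π x) * φ (permAct π x)
      = ∫ x in Ω, symmetrize g₀ x * α := integral_congr_ae hkey
  -- compute LHS
  have hL : ∫ x in Ω, (1 / (n.factorial : ℝ)) *
      ∑ π : Equiv.Perm (Fin n), g₀ (permAct π x) * φ (permAct π x)
      = ∫ x in Ω, g₀ x * φ x := by
    rw [integral_const_mul, integral_finset_sum _ fun π _ => hIntgφ π]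
    have : ∀ π : Equiv.Perm (Fin n),
        ∫ x in Ω, g₀ (permAct π x) * φ (permAct π x) = ∫ x in Ω, g₀ x * φ x := by
      intro π
      exact hcov (fun y => g₀ y * φ y) π
    rw [Finset.sum_congr rfl fun π _ => this π, Finset.sum_const,
      Finset.card_univ, Fintype.card_perm, Fintype.card_fin, nsmul_eq_mul]
    field_simp
  -- compute RHS
  have hR : ∫ x in Ω, symmetrize g₀ x * α = α := by
    have hsy : ∫ x in Ω, symmetrize g₀ x = 1 := by
      unfold symmetrize
      rw [integral_const_mul, integral_finset_sum _ fun π _ => hIntg π]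
      have : ∀ π : Equiv.Perm (Fin n),
          ∫ x in Ω, g₀ (permAct π x) = 1 := by
        intro π
        rw [hcov g₀ π, hdens]
      rw [Finset.sum_congr rfl fun π _ => this π, Finset.sum_const,
        Finset.card_univ, Fintype.card_perm, Fintype.card_fin, nsmul_eq_mul]
      field_simp
    calc ∫ x in Ω, symmetrize g₀ x * α = (∫ x in Ω, symmetrize g₀ x) * α := by
          rw [← integral_mul_const]
      _ = α := by rw [hsy, one_mul]
  rw [← hL, hint_eq, hR]
end
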